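/- Let ψ ∈ 𝒦 and γ(x) = ∫₁^x dt/ψ(t). A positive measurable function g is a ψ-l.c.f. if and only if g admits the representation g(x) = c(x)·exp(∫₁^{e^{γ(x)}} ε(t)/t dt) for x ≥ 1, where c(t) → c ∈ (0,∞) and ε(t) → 0 as t → ∞. -/

import Mathlib

open Filter Real MeasureTheory Set intervalIntegral
open scoped Topology

noncomputable def lcfGamma (ψ : ℝ → ℝ) : ℝ → ℝ := fun x => ∫ t in (1:ℝ)..x, 1 / ψ t

open Classical in
noncomputable def lcfX (ψ : ℝ → ℝ) (u : ℝ) : ℝ :=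
  if h : ∃ x, 1 ≤ x ∧ lcfGamma ψ x = u then h.choose else 1

section Aux

variable {ψ : ℝ → ℝ}

lemma lcf_psi_pos (hψ_one : ∀ x, 1 ≤ ψ x) (x : ℝ) : 0 < ψ x :=
  lt_of_lt_of_le one_pos (hψ_one x)

lemma lcf_shift_tendsto (hψ_one : ∀ x, 1 ≤ ψ x)
    (hψ_small : Tendsto (fun x => ψ x / x) atTop (𝓝 0)) (v : ℝ) :
    Tendsto (fun x => x + v * ψ x) atTop atTop := by
  have hδ : (0:ℝ) < 1 / (2 * (|v| + 1)) := by positivity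
  have h1 := hψ_small.eventually (eventually_abs_sub_lt 0 hδ)
  apply tendsto_atTop_mono' _ _ ((tendsto_id (α := ℝ)).atTop_div_const two_pos)
  filter_upwards [h1, eventually_gt_atTop (0:ℝ)] with x hx hx0
  simp only [sub_zero] at hx
  rw [abs_of_pos (div_pos (lcf_psi_pos hψ_one x) hx0)] at hx
  have hψlt : ψ x < 1 / (2 * (|v| + 1)) * x := by
    calc ψ x = ψ x / x * x := (div_mul_cancel₀ _ hx0.ne').symm
    _ < 1 / (2 * (|v| + 1)) * x := mul_lt_mul_of_pos_right hx hx0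
  have hcan : (|v| + 1) * (1 / (2 * (|v| + 1))) = 1 / 2 := by
    have : |v| + 1 ≠ 0 := by positivity
    field_simp
  have h2 : |v * ψ x| ≤ x / 2 := by
    rw [abs_mul, abs_of_pos (lcf_psi_pos hψ_one x)]
    have ha1 : |v| * ψ x ≤ (|v| + 1) * ψ x :=
      mul_le_mul_of_nonneg_right (by linarith) (lcf_psi_pos hψ_one x).le
    have ha2 : (|v| + 1) * ψ x ≤ (|v| + 1) * (1 / (2 * (|v| + 1)) * x) :=
      mul_le_mul_of_nonneg_left hψlt.le (by positivity)
    have ha3 : (|v| + 1) * (1 / (2 * (|v| + 1)) * x) = x / 2 := by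
      rw [← mul_assoc, hcan]; ring
    linarith
  have := neg_abs_le (v * ψ x)
  simp only [id_eq]
  linarith

lemma lcf_int_one_div_psi (hψ_one : ∀ x, 1 ≤ ψ x) (hψ_mono : Monotone ψ) (p q : ℝ) :
    IntervalIntegrable (fun t => 1 / ψ t) volume p q := by
  rw [intervalIntegrable_iff]
  apply Measure.integrableOn_of_bounded measure_Ioc_lt_top.ne
  · exact (measurable_const.div hψ_mono.measurable).aestronglyMeasurable
  · apply ae_of_all
    intro t
    rw [Real.norm_eq_abs, abs_of_pos (one_div_pos.2 (lcf_psi_pos hψ_one t))]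
    rw [div_le_one (lcf_psi_pos hψ_one t)]
    exact hψ_one t

lemma lcf_gamma_sub (hψ_one : ∀ x, 1 ≤ ψ x) (hψ_mono : Monotone ψ) (p q : ℝ) :
    lcfGamma ψ q - lcfGamma ψ p = ∫ t in p..q, 1 / ψ t := by
  rw [lcfGamma]
  exact integral_interval_sub_left (lcf_int_one_div_psi hψ_one hψ_mono 1 q)
    (lcf_int_one_div_psi hψ_one hψ_mono 1 p)

lemma lcf_gamma_diff_ge (hψ_one : ∀ x, 1 ≤ ψ x) (hψ_mono : Monotone ψ) (p q : ℝ)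
    (hpq : p ≤ q) : (q - p) / ψ q ≤ lcfGamma ψ q - lcfGamma ψ p := by
  rw [lcf_gamma_sub hψ_one hψ_mono]
  have h : (q - p) / ψ q = ∫ _ in p..q, 1 / ψ q := by
    rw [intervalIntegral.integral_const, smul_eq_mul, mul_one_div]
  rw [h]
  apply intervalIntegral.integral_mono_on hpq intervalIntegrable_const
    (lcf_int_one_div_psi hψ_one hψ_mono p q)
  intro t ht
  exact one_div_le_one_div_of_le (lcf_psi_pos hψ_one t) (hψ_mono ht.2)

lemma lcf_gamma_diff_le (hψ_one : ∀ x, 1 ≤ ψ x) (hψ_mono : Monotone ψ) (p q : ℝ)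
    (hpq : p ≤ q) : lcfGamma ψ q - lcfGamma ψ p ≤ (q - p) / ψ p := by
  rw [lcf_gamma_sub hψ_one hψ_mono]
  have h : (q - p) / ψ p = ∫ _ in p..q, 1 / ψ p := by
    rw [intervalIntegral.integral_const, smul_eq_mul, mul_one_div]
  rw [h]
  apply intervalIntegral.integral_mono_on hpq (lcf_int_one_div_psi hψ_one hψ_mono p q)
    intervalIntegrable_const
  intro t ht
  exact one_div_le_one_div_of_le (lcf_psi_pos hψ_one p) (hψ_mono ht.1)

lemma lcf_gamma_strictMono (hψ_one : ∀ x, 1 ≤ ψ x) (hψ_mono : Monotone ψ) :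
    StrictMono (lcfGamma ψ) := by
  intro p q hpq
  have h1 := lcf_gamma_diff_ge hψ_one hψ_mono p q hpq.le
  have h2 : (0:ℝ) < (q - p) / ψ q := div_pos (by linarith) (lcf_psi_pos hψ_one q)
  linarith

lemma lcf_gamma_continuous (hψ_one : ∀ x, 1 ≤ ψ x) (hψ_mono : Monotone ψ) :
    Continuous (lcfGamma ψ) :=
  intervalIntegral.continuous_primitive (fun p q => lcf_int_one_div_psi hψ_one hψ_mono p q) 1

lemma lcf_gamma_tendsto (hψ_one : ∀ x, 1 ≤ ψ x) (hψ_mono : Monotone ψ)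
    (hψ_small : Tendsto (fun x => ψ x / x) atTop (𝓝 0)) :
    Tendsto (lcfGamma ψ) atTop atTop := by
  have h1 : ∀ᶠ x in atTop, ψ x ≤ x := by
    have := hψ_small.eventually (eventually_abs_sub_lt 0 one_pos)
    filter_upwards [this, eventually_gt_atTop (0:ℝ)] with x hx hx0
    simp only [sub_zero] at hx
    rw [abs_of_pos (div_pos (lcf_psi_pos hψ_one x) hx0), div_lt_one hx0] at hx
    exact hx.le
  obtain ⟨x₁, hx₁⟩ := (h1.and (eventually_ge_atTop (1:ℝ))).exists_forall_of_atTop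
  have key : ∀ x ≥ x₁, lcfGamma ψ x₁ + (Real.log x - Real.log x₁) ≤ lcfGamma ψ x := by
    intro x hx
    have hx₁1 : (1:ℝ) ≤ x₁ := (hx₁ x₁ le_rfl).2
    have hlog : Real.log x - Real.log x₁ ≤ lcfGamma ψ x - lcfGamma ψ x₁ := by
      rw [lcf_gamma_sub hψ_one hψ_mono]
      have hrw : Real.log x - Real.log x₁ = ∫ t in x₁..x, 1 / t := by
        rw [integral_one_div (by
          intro h
          rw [Set.uIcc_of_le hx] at h
          linarith [h.1])]
        rw [Real.log_div (by linarith) (by linarith)]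
      rw [hrw]
      apply intervalIntegral.integral_mono_on hx
      · apply ContinuousOn.intervalIntegrable
        apply ContinuousOn.div continuousOn_const continuousOn_id
        intro t ht
        rw [Set.uIcc_of_le hx] at ht
        have : (1:ℝ) ≤ t := le_trans hx₁1 ht.1
        simp only [id_eq]
        linarith
      · exact lcf_int_one_div_psi hψ_one hψ_mono x₁ x
      · intro t ht
        exact one_div_le_one_div_of_le (lcf_psi_pos hψ_one t) (hx₁ t ht.1).1
    linarith
  apply tendsto_atTop_mono' atTop (eventually_atTop.2 ⟨x₁, key⟩)
  exact tendsto_atTop_add_const_left _ _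
    (tendsto_atTop_add_const_right _ _ Real.tendsto_log_atTop)

end Aux

section Aux2

variable {ψ : ℝ → ℝ}

lemma lcf_gamma_one : lcfGamma ψ 1 = 0 := intervalIntegral.integral_same

lemma lcfX_one_le (u : ℝ) : 1 ≤ lcfX ψ u := by
  rw [lcfX]
  split
  · next h => exact h.choose_spec.1
  · exact le_rfl

lemma lcfX_spec (hψ_one : ∀ x, 1 ≤ ψ x) (hψ_mono : Monotone ψ)
    (hψ_small : Tendsto (fun x => ψ x / x) atTop (𝓝 0)) (u : ℝ) (hu : 0 ≤ u) :
    lcfGamma ψ (lcfX ψ u) = u := by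
  have hex : ∃ x, 1 ≤ x ∧ lcfGamma ψ x = u := by
    obtain ⟨b, hγb, hb1⟩ :=
      (((lcf_gamma_tendsto hψ_one hψ_mono hψ_small).eventually
        (eventually_ge_atTop u)).and (eventually_ge_atTop (1:ℝ))).exists
    have hmem : u ∈ Icc (lcfGamma ψ 1) (lcfGamma ψ b) := by
      rw [lcf_gamma_one]
      exact ⟨hu, hγb⟩
    obtain ⟨x, hx, hγx⟩ := intermediate_value_Icc hb1
      ((lcf_gamma_continuous hψ_one hψ_mono).continuousOn) hmem
    exact ⟨x, hx.1, hγx⟩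
  rw [lcfX, dif_pos hex]
  exact hex.choose_spec.2

lemma lcfX_neg (hψ_one : ∀ x, 1 ≤ ψ x) (hψ_mono : Monotone ψ) (u : ℝ) (hu : u < 0) :
    lcfX ψ u = 1 := by
  rw [lcfX, dif_neg]
  rintro ⟨x, hx1, hγx⟩
  have h0 : lcfGamma ψ 1 ≤ lcfGamma ψ x := (lcf_gamma_strictMono hψ_one hψ_mono).monotone hx1
  rw [lcf_gamma_one, hγx] at h0
  linarith

lemma lcfX_mono (hψ_one : ∀ x, 1 ≤ ψ x) (hψ_mono : Monotone ψ)
    (hψ_small : Tendsto (fun x => ψ x / x) atTop (𝓝 0)) : Monotone (lcfX ψ) := by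
  intro u u' huu'
  by_cases h : 0 ≤ u
  · have h' : 0 ≤ u' := le_trans h huu'
    rw [← (lcf_gamma_strictMono hψ_one hψ_mono).le_iff_le,
      lcfX_spec hψ_one hψ_mono hψ_small u h, lcfX_spec hψ_one hψ_mono hψ_small u' h']
    exact huu'
  · rw [lcfX_neg hψ_one hψ_mono u (lt_of_not_ge h)]
    exact lcfX_one_le u'

lemma lcfX_gamma (hψ_one : ∀ x, 1 ≤ ψ x) (hψ_mono : Monotone ψ)
    (hψ_small : Tendsto (fun x => ψ x / x) atTop (𝓝 0)) (x : ℝ) (hx : 1 ≤ x) :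
    lcfX ψ (lcfGamma ψ x) = x := by
  have hu : 0 ≤ lcfGamma ψ x := by
    have := (lcf_gamma_strictMono hψ_one hψ_mono).monotone hx
    rwa [lcf_gamma_one] at this
  exact (lcf_gamma_strictMono hψ_one hψ_mono).injective
    (lcfX_spec hψ_one hψ_mono hψ_small _ hu)

lemma lcfX_ge (hψ_one : ∀ x, 1 ≤ ψ x) (hψ_mono : Monotone ψ)
    (hψ_small : Tendsto (fun x => ψ x / x) atTop (𝓝 0)) (u : ℝ) (hu : 0 ≤ u) :
    u + 1 ≤ lcfX ψ u := by
  set y := lcfX ψ u with hy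
  have h1 : (1:ℝ) ≤ y := lcfX_one_le u
  have h2 : lcfGamma ψ y - lcfGamma ψ 1 ≤ (y - 1) / ψ 1 :=
    lcf_gamma_diff_le hψ_one hψ_mono 1 y h1
  have h3 : (y - 1) / ψ 1 ≤ y - 1 := by
    apply div_le_self (by linarith) (hψ_one 1)
  rw [lcf_gamma_one, lcfX_spec hψ_one hψ_mono hψ_small u hu] at h2
  linarith

lemma lcfX_tendsto (hψ_one : ∀ x, 1 ≤ ψ x) (hψ_mono : Monotone ψ)
    (hψ_small : Tendsto (fun x => ψ x / x) atTop (𝓝 0)) :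
    Tendsto (lcfX ψ) atTop atTop := by
  apply tendsto_atTop_mono' atTop
    (by filter_upwards [eventually_ge_atTop (0:ℝ)] with u hu
        exact lcfX_ge hψ_one hψ_mono hψ_small u hu)
  exact tendsto_atTop_add_const_right _ _ tendsto_id

lemma lcf_a_le_one {a : ℝ → ℝ} (hψ_one : ∀ x, 1 ≤ ψ x) (hψ_mono : Monotone ψ)
    (hA : ∀ v : ℝ, 0 < v → ∀ᶠ x in atTop, a v * ψ x ≤ ψ (x - v * ψ x))
    (v : ℝ) (hv : 0 < v) : a v ≤ 1 := by
  obtain ⟨x, hx⟩ := (hA v hv).exists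
  have h1 : ψ (x - v * ψ x) ≤ ψ x := by
    apply hψ_mono
    nlinarith [lcf_psi_pos hψ_one x]
  have := le_trans hx h1
  nlinarith [lcf_psi_pos hψ_one x]

end Aux2

section UCT

variable {ψ a h : ℝ → ℝ}

lemma lcf_uct (hψ_one : ∀ x, 1 ≤ ψ x) (hψ_mono : Monotone ψ)
    (ha_pos : ∀ v : ℝ, 0 < v → 0 < a v)
    (hA : ∀ v : ℝ, 0 < v → ∀ᶠ x in atTop, a v * ψ x ≤ ψ (x - v * ψ x))
    (hh_meas : Measurable h)
    (hp : ∀ v : ℝ, 0 ≤ v → Tendsto (fun x => h (x + v * ψ x) - h x) atTop (𝓝 0))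
    (U : ℝ) (hU : 0 < U) (ε : ℝ) (hε : 0 < ε) :
    ∀ᶠ x in atTop, ∀ v ∈ Icc (0:ℝ) U, |h (x + v * ψ x) - h x| ≤ ε := by
  have hψpos := lcf_psi_pos hψ_one
  by_contra hcon
  rw [Filter.not_eventually] at hcon
  have hseq : ∀ n : ℕ, ∃ x, (n:ℝ) ≤ x ∧ ∃ v, v ∈ Icc (0:ℝ) U ∧
      ε < |h (x + v * ψ x) - h x| := by
    intro n
    rcases (hcon.and_eventually (eventually_ge_atTop (n:ℝ))).exists with ⟨x, hx1, hx2⟩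
    push_neg at hx1
    rcases hx1 with ⟨v, hv1, hv2⟩
    exact ⟨x, hx2, v, hv1, hv2⟩
  choose x hxge v hvmem hviol using hseq
  set y : ℕ → ℝ := fun n => x n + v n * ψ (x n) with hy
  have hxT : Tendsto x atTop atTop :=
    tendsto_atTop_mono hxge tendsto_natCast_atTop_atTop
  have hyx : ∀ n, x n ≤ y n := by
    intro n
    have := mul_nonneg (hvmem n).1 (hψpos (x n)).le
    simp only [hy]; linarith
  have hyT : Tendsto y atTop atTop := tendsto_atTop_mono hyx hxT
  set α := a U with hαdef
  have hα : 0 < α := ha_pos U hU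
  have hα1 : α ≤ 1 := lcf_a_le_one hψ_one hψ_mono hA U hU
  set K : ℝ := U + 2 / α with hKdef
  clear_value K
  have hK2 : (2:ℝ) ≤ K := by
    rw [hKdef]
    have : (2:ℝ) ≤ 2 / α := by
      rw [le_div_iff₀ hα]; nlinarith
    linarith
  -- eventual lower bound on the ratio ψ(x n)/ψ(y n)
  have hρev : ∀ᶠ n in atTop, α * ψ (y n) ≤ ψ (x n) := by
    obtain ⟨z₀, hz₀⟩ := eventually_atTop.1 (hA U hU)
    filter_upwards [hyT.eventually (eventually_ge_atTop z₀)] with n hn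
    have h1 : y n - U * ψ (y n) ≤ x n := by
      have h2 : v n * ψ (x n) ≤ U * ψ (y n) := by
        have := hψ_mono (hyx n)
        nlinarith [(hvmem n).1, (hvmem n).2, hψpos (x n)]
      simp only [hy]; linarith
    calc α * ψ (y n) ≤ ψ (y n - U * ψ (y n)) := hz₀ (y n) hn
    _ ≤ ψ (x n) := hψ_mono h1
  -- the two families of sets
  set A : ℕ → Set ℝ := fun n =>
    {w | w ∈ Icc (0:ℝ) K ∧ ∀ m, n ≤ m → |h (x m + w * ψ (x m)) - h (x m)| ≤ ε/3} with hAdef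
  set T : ℕ → Set ℝ := fun n =>
    {w | w ∈ Icc (0:ℝ) 2 ∧ ∀ m, n ≤ m → |h (y m + w * ψ (y m)) - h (y m)| ≤ ε/3} with hTdef
  have hmeas_aux : ∀ (z : ℕ → ℝ) (n : ℕ), MeasurableSet
      {w : ℝ | ∀ m, n ≤ m → |h (z m + w * ψ (z m)) - h (z m)| ≤ ε/3} := by
    intro z n
    have : {w : ℝ | ∀ m, n ≤ m → |h (z m + w * ψ (z m)) - h (z m)| ≤ ε/3}
        = ⋂ m, ⋂ (_ : n ≤ m), {w : ℝ | |h (z m + w * ψ (z m)) - h (z m)| ≤ ε/3} := by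
      ext w; simp [Set.mem_iInter]
    rw [this]
    apply MeasurableSet.iInter; intro m; apply MeasurableSet.iInter; intro _
    have hf : Measurable fun w : ℝ => |h (z m + w * ψ (z m)) - h (z m)| := by
      apply Measurable.abs
      apply Measurable.sub _ measurable_const
      exact hh_meas.comp (measurable_const.add (measurable_id.mul_const _))
    exact measurableSet_le hf measurable_const
  have hAmeas : ∀ n, MeasurableSet (A n) := fun n =>
    measurableSet_Icc.inter (hmeas_aux x n)
  have hTmeas : ∀ n, MeasurableSet (T n) := fun n =>
    measurableSet_Icc.inter (hmeas_aux y n)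
  -- coverage
  have hcover : ∀ (z : ℕ → ℝ), Tendsto z atTop atTop → ∀ C : ℝ, ∀ w ∈ Icc (0:ℝ) C,
      ∃ n : ℕ, ∀ m, n ≤ m → |h (z m + w * ψ (z m)) - h (z m)| ≤ ε/3 := by
    intro z hz C w hw
    have h1 := ((hp w hw.1).comp hz).eventually (eventually_abs_sub_lt 0 (by positivity : (0:ℝ) < ε/3))
    rcases eventually_atTop.1 h1 with ⟨n, hn⟩
    exact ⟨n, fun m hm => by simpa [sub_zero] using (hn m hm).le⟩
  have hAcover : Icc (0:ℝ) K ⊆ ⋃ n, A n := by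
    intro w hw
    rcases hcover x hxT K w hw with ⟨n, hn⟩
    exact Set.mem_iUnion.2 ⟨n, hw, hn⟩
  have hTcover : Icc (0:ℝ) 2 ⊆ ⋃ n, T n := by
    intro w hw
    rcases hcover y hyT 2 w hw with ⟨n, hn⟩
    exact Set.mem_iUnion.2 ⟨n, hw, hn⟩
  have hAmono : Monotone A := by
    intro n n' hnn' w hw
    exact ⟨hw.1, fun m hm => hw.2 m (le_trans hnn' hm)⟩
  have hTmono : Monotone T := by
    intro n n' hnn' w hw
    exact ⟨hw.1, fun m hm => hw.2 m (le_trans hnn' hm)⟩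
  -- measure convergence
  have hAU : (⋃ n, A n) = Icc (0:ℝ) K :=
    Set.Subset.antisymm (Set.iUnion_subset fun n w hw => hw.1) hAcover
  have hTU : (⋃ n, T n) = Icc (0:ℝ) 2 :=
    Set.Subset.antisymm (Set.iUnion_subset fun n w hw => hw.1) hTcover
  have hAtend : Tendsto (fun n => volume (A n)) atTop (𝓝 (ENNReal.ofReal K)) := by
    have := tendsto_measure_iUnion_atTop (μ := volume) hAmono
    rwa [hAU, Real.volume_Icc, sub_zero] at this
  have hTtend : Tendsto (fun n => volume (T n)) atTop (𝓝 (ENNReal.ofReal 2)) := by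
    have := tendsto_measure_iUnion_atTop (μ := volume) hTmono
    rwa [hTU, Real.volume_Icc, sub_zero] at this
  have hAev : ∀ᶠ n in atTop, ENNReal.ofReal (K - 1/4) < volume (A n) := by
    apply hAtend.eventually_const_lt
    rw [ENNReal.ofReal_lt_ofReal_iff (by linarith)]
    linarith
  have hTev : ∀ᶠ n in atTop, ENNReal.ofReal (2 - α/4) < volume (T n) := by
    apply hTtend.eventually_const_lt
    rw [ENNReal.ofReal_lt_ofReal_iff (by norm_num)]
    linarith
  obtain ⟨n, hAn, hTn, hρn⟩ := (hAev.and (hTev.and hρev)).exists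
  obtain ⟨hTn, hρn⟩ := (⟨hTn, hρn⟩ : _ ∧ _)
  -- the affine rescaling map
  obtain ⟨ρ, hρdef⟩ : ∃ ρ : ℝ, ρ = ψ (x n) / ψ (y n) := ⟨_, rfl⟩
  have hρpos : 0 < ρ := hρdef ▸ div_pos (hψpos _) (hψpos _)
  have hρ1 : ρ ≤ 1 := by
    rw [hρdef, div_le_one (hψpos _)]
    exact hψ_mono (hyx n)
  have hρα : α ≤ ρ := hρdef ▸ (le_div_iff₀ (hψpos _)).2 hρn
  set φ : ℝ → ℝ := fun w => (w - v n) * ρ with hφdef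
  have hφmeas : Measurable φ := (measurable_id.sub_const _).mul_const _
  have hIeq : φ ⁻¹' (Icc 0 2) = Icc (v n) (v n + 2/ρ) := by
    ext w
    simp only [Set.mem_preimage, Set.mem_Icc, hφdef]
    constructor
    · rintro ⟨h1, h2⟩
      constructor
      · nlinarith
      · rw [← le_div_iff₀ hρpos] at h2; linarith
    · rintro ⟨h1, h2⟩
      constructor
      · nlinarith
      · rw [← le_div_iff₀ hρpos]; linarith
  have hvolpre : ∀ S : Set ℝ, volume (φ ⁻¹' S) = ENNReal.ofReal ρ⁻¹ * volume S := by
    intro S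
    have : φ ⁻¹' S = (fun w => w - v n) ⁻¹' ((fun w => w * ρ) ⁻¹' S) := rfl
    rw [this]
    rw [show (fun w : ℝ => w - v n) = (fun w : ℝ => w + (-v n)) from funext fun w => by ring_nf,
      measure_preimage_add_right volume (-v n) _,
      Real.volume_preimage_mul_right hρpos.ne' S, abs_of_pos (inv_pos.2 hρpos)]
  -- lower bound on the measure of B
  set B : Set ℝ := φ ⁻¹' (T n) with hBdef
  have hBsub2 : B ⊆ φ ⁻¹' (Icc 0 2) := fun w hw => (hw : φ w ∈ T n).1
  have hBsubK : B ⊆ Icc 0 K := by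
    intro w hw
    have := hIeq ▸ hBsub2 hw
    rcases this with ⟨h1, h2⟩
    constructor
    · linarith [(hvmem n).1]
    · have h2ρ : 2/ρ ≤ 2/α := div_le_div_of_nonneg_left (by norm_num) hα hρα
      have := (hvmem n).2
      simp only [hKdef]; linarith
  have hBad : volume (φ ⁻¹' (Icc 0 2) \ B) ≤ ENNReal.ofReal (1/4) := by
    have hsub : φ ⁻¹' (Icc 0 2) \ B = φ ⁻¹' (Icc 0 2 \ T n) := by
      rw [Set.preimage_diff]
    rw [hsub, hvolpre]
    have hdiff : volume (Icc (0:ℝ) 2 \ T n) ≤ ENNReal.ofReal (α/4) := by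
      rw [measure_diff (by rw [← hTU]; exact Set.subset_iUnion T n) (hTmeas n).nullMeasurableSet
        (lt_of_le_of_lt (measure_mono fun w hw => hw.1) measure_Icc_lt_top).ne]
      rw [Real.volume_Icc, sub_zero]
      calc ENNReal.ofReal 2 - volume (T n)
          ≤ ENNReal.ofReal 2 - ENNReal.ofReal (2 - α/4) := by
            exact tsub_le_tsub_left hTn.le _
      _ = ENNReal.ofReal (α/4) := by
            rw [← ENNReal.ofReal_sub _ (by linarith)]
            norm_num
    calc ENNReal.ofReal ρ⁻¹ * volume (Icc (0:ℝ) 2 \ T n)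
        ≤ ENNReal.ofReal ρ⁻¹ * ENNReal.ofReal (α/4) := mul_le_mul_right hdiff _
    _ = ENNReal.ofReal (ρ⁻¹ * (α/4)) := (ENNReal.ofReal_mul (by positivity)).symm
    _ ≤ ENNReal.ofReal (1/4) := by
        apply ENNReal.ofReal_le_ofReal
        have hinv : ρ⁻¹ ≤ α⁻¹ := by
          apply inv_anti₀ hα hρα
        calc ρ⁻¹ * (α/4) ≤ α⁻¹ * (α/4) := by nlinarith
        _ = 1/4 := by field_simp
  have hBvol : ENNReal.ofReal (7/4) ≤ volume B := by
    have hIvol : ENNReal.ofReal 2 ≤ volume (φ ⁻¹' (Icc 0 2)) := by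
      rw [hIeq, Real.volume_Icc]
      apply ENNReal.ofReal_le_ofReal
      have : (2:ℝ) ≤ 2/ρ := by
        rw [le_div_iff₀ hρpos]; nlinarith
      linarith
    have hsplit : volume (φ ⁻¹' (Icc 0 2)) ≤ volume B + volume (φ ⁻¹' (Icc 0 2) \ B) := by
      calc volume (φ ⁻¹' (Icc 0 2)) ≤ volume (B ∪ (φ ⁻¹' (Icc 0 2) \ B)) :=
            measure_mono (fun w hw => by
              by_cases hB : w ∈ B
              · exact Or.inl hB
              · exact Or.inr ⟨hw, hB⟩)
      _ ≤ volume B + volume (φ ⁻¹' (Icc 0 2) \ B) := measure_union_le _ _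
    have h1 : ENNReal.ofReal 2 ≤ volume B + ENNReal.ofReal (1/4) :=
      le_trans hIvol (le_trans hsplit (add_le_add_right hBad _ |>.trans_eq (add_comm _ _) |>.trans_eq (add_comm _ _)))
    have := tsub_le_iff_right.2 h1
    calc ENNReal.ofReal (7/4) = ENNReal.ofReal 2 - ENNReal.ofReal (1/4) := by
          rw [← ENNReal.ofReal_sub _ (by norm_num)]; norm_num
    _ ≤ volume B := this
  -- intersection is nonempty
  have hABnonempty : (A n ∩ B).Nonempty := by
    by_contra hempty
    rw [Set.not_nonempty_iff_eq_empty] at hempty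
    have hsum : volume (A n) + volume B =
        volume (A n ∪ B) + volume (A n ∩ B) :=
      (measure_union_add_inter (A n) (hφmeas (hTmeas n))).symm
    rw [hempty, measure_empty, add_zero] at hsum
    have hle : volume (A n ∪ B) ≤ ENNReal.ofReal K := by
      have hIccK : volume (Icc (0:ℝ) K) = ENNReal.ofReal K := by
        rw [Real.volume_Icc, sub_zero]
      rw [← hIccK]
      exact measure_mono (Set.union_subset (fun w hw => hw.1) hBsubK)
    have hgt : ENNReal.ofReal K < volume (A n) + volume B := by
      calc ENNReal.ofReal K < ENNReal.ofReal (K - 1/4) + ENNReal.ofReal (7/4) := by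
            rw [← ENNReal.ofReal_add (by linarith) (by norm_num)]
            rw [ENNReal.ofReal_lt_ofReal_iff (by linarith)]
            linarith [hK2]
      _ ≤ volume (A n) + volume B := add_le_add hAn.le hBvol
    rw [hsum] at hgt
    exact absurd hle (not_le.2 hgt)
  obtain ⟨w, hwA, hwB⟩ := hABnonempty
  -- derive the contradiction
  have h1 : |h (x n + w * ψ (x n)) - h (x n)| ≤ ε/3 := hwA.2 n le_rfl
  have h2 : |h (y n + φ w * ψ (y n)) - h (y n)| ≤ ε/3 := (hwB : φ w ∈ T n).2 n le_rfl
  have heq : y n + φ w * ψ (y n) = x n + w * ψ (x n) := by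
    have hcancel : ρ * ψ (y n) = ψ (x n) := by
      rw [hρdef]; exact div_mul_cancel₀ _ (hψpos (y n)).ne'
    have h5 : φ w * ψ (y n) = (w - v n) * ψ (x n) := by
      simp only [hφdef]
      rw [mul_assoc, hcancel]
    rw [h5]
    simp only [hy]
    ring
  rw [heq] at h2
  have h3 : |h (y n) - h (x n)| ≤ 2 * (ε/3) := by
    have := abs_sub_le (h (y n)) (h (x n + w * ψ (x n))) (h (x n))
    rw [abs_sub_comm (h (y n)) (h (x n + w * ψ (x n)))] at this
    linarith
  have h4 := hviol n
  simp only [hy] at h3 h4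
  linarith

end UCT

section Transfer

variable {ψ a h : ℝ → ℝ}

lemma lcf_a_integrable (ha_int : Tendsto (fun r => ∫ u in (0:ℝ)..r, a u) atTop atTop)
    (R : ℝ) (hR : 0 ≤ R) : IntervalIntegrable a volume 0 R := by
  obtain ⟨r, hr1, hrR⟩ :=
    ((ha_int.eventually (eventually_ge_atTop (1:ℝ))).and
      (eventually_ge_atTop (max R 0))).exists
  have hr0 : (0:ℝ) ≤ r := le_trans (le_max_right R 0) hrR
  have hint : IntervalIntegrable a volume 0 r := by
    by_contra hcon
    rw [intervalIntegral.integral_undef hcon] at hr1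
    linarith
  apply hint.mono_set
  apply Set.uIcc_subset_uIcc
  · exact Set.left_mem_uIcc
  · rw [Set.uIcc_of_le hr0]
    exact ⟨hR, le_trans (le_max_left R 0) hrR⟩

lemma lcf_exists_N (hψ_one : ∀ x, 1 ≤ ψ x) (hψ_mono : Monotone ψ)
    (ha_anti : AntitoneOn a (Set.Ioi 0))
    (ha_int : Tendsto (fun r => ∫ u in (0:ℝ)..r, a u) atTop atTop) :
    ∃ N : ℕ, 0 < N ∧ 3 ≤ ∑ k ∈ Finset.range N, a (k + 1) := by
  set C : ℝ := ∫ u in (0:ℝ)..1, a u with hC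
  obtain ⟨r₀, hr₀⟩ := eventually_atTop.1 (ha_int.eventually (eventually_ge_atTop (3 + C)))
  obtain ⟨N, hN⟩ := exists_nat_ge r₀
  refine ⟨N + 1, Nat.succ_pos N, ?_⟩
  have hint1 : ∫ u in (1:ℝ)..(N + 1 + 1 : ℝ), a u ≥ 3 := by
    have hsplit : (∫ u in (0:ℝ)..1, a u) + ∫ u in (1:ℝ)..(N + 1 + 1 : ℝ), a u
        = ∫ u in (0:ℝ)..(N + 1 + 1 : ℝ), a u := by
      apply intervalIntegral.integral_add_adjacent_intervals
      · exact lcf_a_integrable ha_int 1 zero_le_one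
      · apply (lcf_a_integrable ha_int ((N:ℝ) + 1 + 1) (by positivity)).mono_set
        apply Set.uIcc_subset_uIcc
        · rw [Set.uIcc_of_le (by positivity : (0:ℝ) ≤ (N:ℝ) + 1 + 1)]
          exact ⟨zero_le_one, by linarith [Nat.cast_nonneg (α := ℝ) N]⟩
        · exact Set.right_mem_uIcc
    have h2 : ∫ u in (0:ℝ)..(N + 1 + 1 : ℝ), a u ≥ 3 + C := by
      apply hr₀
      linarith [hN]
    linarith [hsplit, h2]
  -- each term dominates the piece of the integral
  have hterm : ∀ k : ℕ, (∫ u in ((k:ℝ) + 1)..((k:ℝ) + 2), a u) ≤ a ((k:ℝ) + 1) := by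
    intro k
    have hk1 : (0:ℝ) < (k:ℝ) + 1 := by positivity
    have hle : ((k:ℝ) + 1) ≤ (k:ℝ) + 2 := by linarith
    have hintk : IntervalIntegrable a volume ((k:ℝ) + 1) ((k:ℝ) + 2) := by
      apply (lcf_a_integrable ha_int ((k:ℝ) + 2) (by positivity)).mono_set
      apply Set.uIcc_subset_uIcc <;>
        rw [Set.uIcc_of_le (by positivity : (0:ℝ) ≤ (k:ℝ) + 2)] <;>
        constructor <;> linarith
    have : a ((k:ℝ) + 1) = ∫ _ in ((k:ℝ) + 1)..((k:ℝ) + 2), a ((k:ℝ) + 1) := by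
      rw [intervalIntegral.integral_const, smul_eq_mul]
      ring
    rw [this]
    apply intervalIntegral.integral_mono_on hle hintk intervalIntegrable_const
    intro t ht
    exact ha_anti (Set.mem_Ioi.2 hk1) (Set.mem_Ioi.2 (by linarith [ht.1])) ht.1
  have hsum : (∫ u in (1:ℝ)..((N:ℝ) + 1 + 1), a u)
      = ∑ k ∈ Finset.range (N + 1), ∫ u in ((k:ℝ) + 1)..((k:ℝ) + 2), a u := by
    have key := intervalIntegral.sum_integral_adjacent_intervals
      (f := a) (μ := volume) (a := fun k : ℕ => ((k:ℝ) + 1)) (n := N + 1) ?_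
    · push_cast at key
      norm_num at key
      rw [show ((N:ℝ) + 1 + 1) = ((N:ℝ) + 1 + 1) from rfl, ← key]
      apply Finset.sum_congr rfl
      intro k _
      congr 1
      ring
    · intro k hk
      apply (lcf_a_integrable ha_int (((k:ℕ):ℝ) + 2) (by positivity)).mono_set
      apply Set.uIcc_subset_uIcc <;>
        rw [Set.uIcc_of_le (by positivity : (0:ℝ) ≤ ((k:ℕ):ℝ) + 2)] <;>
        constructor <;> push_cast <;> linarith
  calc (3:ℝ) ≤ ∫ u in (1:ℝ)..((N:ℝ) + 1 + 1), a u := by exact_mod_cast hint1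
  _ = ∑ k ∈ Finset.range (N + 1), ∫ u in ((k:ℝ) + 1)..((k:ℝ) + 2), a u := hsum
  _ ≤ ∑ k ∈ Finset.range (N + 1), a ((k:ℝ) + 1) := Finset.sum_le_sum fun k _ => hterm k

lemma lcf_gamma_growth (hψ_one : ∀ x, 1 ≤ ψ x) (hψ_mono : Monotone ψ)
    (ha_anti : AntitoneOn a (Set.Ioi 0))
    (hA : ∀ v : ℝ, 0 < v → ∀ᶠ x in atTop, a v * ψ x ≤ ψ (x - v * ψ x))
    (ha_int : Tendsto (fun r => ∫ u in (0:ℝ)..r, a u) atTop atTop) :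
    ∃ N : ℕ, 0 < N ∧ ∀ᶠ x in atTop,
      3 ≤ lcfGamma ψ (x + (N:ℝ) * ψ x) - lcfGamma ψ x := by
  obtain ⟨N, hN0, hNsum⟩ := lcf_exists_N hψ_one hψ_mono ha_anti ha_int
  refine ⟨N, hN0, ?_⟩
  have hψpos := lcf_psi_pos hψ_one
  have hstep : ∀ k : ℕ, ∀ᶠ x in atTop,
      a ((k:ℝ) + 1) ≤ lcfGamma ψ (x + ((k:ℝ) + 1) * ψ x) - lcfGamma ψ (x + (k:ℝ) * ψ x) := by
    intro k
    have hk1 : (0:ℝ) < (k:ℝ) + 1 := by positivity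
    obtain ⟨z₀, hz₀⟩ := eventually_atTop.1 (hA ((k:ℝ) + 1) hk1)
    filter_upwards [eventually_ge_atTop z₀] with x hx
    set y := x + ((k:ℝ) + 1) * ψ x with hydef
    have hxy : x ≤ y := by
      have := mul_nonneg hk1.le (hψpos x).le
      simp only [hydef]; linarith
    have hyz : z₀ ≤ y := le_trans hx hxy
    have hmono := hψ_mono hxy
    have h1 : a ((k:ℝ) + 1) * ψ y ≤ ψ (y - ((k:ℝ) + 1) * ψ y) := hz₀ y hyz
    have h2 : ψ (y - ((k:ℝ) + 1) * ψ y) ≤ ψ x := by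
      apply hψ_mono
      have : ((k:ℝ) + 1) * ψ x ≤ ((k:ℝ) + 1) * ψ y :=
        mul_le_mul_of_nonneg_left hmono hk1.le
      simp only [hydef]; linarith
    have h3 : a ((k:ℝ) + 1) * ψ y ≤ ψ x := le_trans h1 h2
    have h4 : (y - (x + (k:ℝ) * ψ x)) / ψ y ≤ lcfGamma ψ y - lcfGamma ψ (x + (k:ℝ) * ψ x) := by
      apply lcf_gamma_diff_ge hψ_one hψ_mono
      have := mul_nonneg (Nat.cast_nonneg (α := ℝ) k) (hψpos x).le
      simp only [hydef]; nlinarith [hψpos x]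
    have h5 : y - (x + (k:ℝ) * ψ x) = ψ x := by simp only [hydef]; ring
    rw [h5] at h4
    have h6 : a ((k:ℝ) + 1) ≤ ψ x / ψ y := (le_div_iff₀ (hψpos y)).2 h3
    linarith
  have hall : ∀ᶠ x in atTop, ∀ k : Fin N,
      a ((k:ℝ) + 1) ≤ lcfGamma ψ (x + ((k:ℝ) + 1) * ψ x) - lcfGamma ψ (x + (k:ℝ) * ψ x) :=
    eventually_all.2 fun k => hstep k
  filter_upwards [hall] with x hx
  have htel := Finset.sum_range_sub (f := fun k : ℕ => lcfGamma ψ (x + (k:ℝ) * ψ x)) N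
  have hsum2 : ∑ k ∈ Finset.range N, a ((k:ℝ) + 1)
      ≤ ∑ k ∈ Finset.range N, (lcfGamma ψ (x + ((k + 1 : ℕ):ℝ) * ψ x)
          - lcfGamma ψ (x + ((k:ℕ):ℝ) * ψ x)) := by
    apply Finset.sum_le_sum
    intro k hk
    have := hx ⟨k, Finset.mem_range.1 hk⟩
    push_cast
    push_cast at this
    convert this using 3
  rw [htel] at hsum2
  have hzero : lcfGamma ψ (x + ((0:ℕ):ℝ) * ψ x) = lcfGamma ψ x := by norm_num
  rw [hzero] at hsum2
  linarith

lemma lcf_transfer (hψ_one : ∀ x, 1 ≤ ψ x) (hψ_mono : Monotone ψ)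
    (hψ_small : Tendsto (fun x => ψ x / x) atTop (𝓝 0))
    (ha_anti : AntitoneOn a (Set.Ioi 0))
    (ha_pos : ∀ v : ℝ, 0 < v → 0 < a v)
    (hA : ∀ v : ℝ, 0 < v → ∀ᶠ x in atTop, a v * ψ x ≤ ψ (x - v * ψ x))
    (ha_int : Tendsto (fun r => ∫ u in (0:ℝ)..r, a u) atTop atTop)
    (hh_meas : Measurable h)
    (hp : ∀ v : ℝ, 0 ≤ v → Tendsto (fun x => h (x + v * ψ x) - h x) atTop (𝓝 0))
    (ε : ℝ) (hε : 0 < ε) :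
    ∀ᶠ u in atTop, ∀ s ∈ Icc (0:ℝ) 2,
      |h (lcfX ψ (u + s)) - h (lcfX ψ u)| ≤ ε := by
  have hψpos := lcf_psi_pos hψ_one
  obtain ⟨N, hN0, hNev⟩ := lcf_gamma_growth hψ_one hψ_mono ha_anti hA ha_int
  have hNpos : (0:ℝ) < N := by exact_mod_cast hN0
  have huct := lcf_uct hψ_one hψ_mono ha_pos hA hh_meas hp N hNpos ε hε
  obtain ⟨x₀, hx₀⟩ := eventually_atTop.1 (huct.and hNev)
  filter_upwards [(lcfX_tendsto hψ_one hψ_mono hψ_small).eventually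
      (eventually_ge_atTop x₀), eventually_ge_atTop (0:ℝ)] with u hXu hu0
  intro s hs
  set x := lcfX ψ u with hxdef
  set θ := (lcfX ψ (u + s) - x) / ψ x with hθdef
  have hX1 : lcfGamma ψ x = u := lcfX_spec hψ_one hψ_mono hψ_small u hu0
  have hX2 : lcfGamma ψ (lcfX ψ (u + s)) = u + s :=
    lcfX_spec hψ_one hψ_mono hψ_small (u + s) (by linarith [hs.1])
  have hmx : lcfX ψ u ≤ lcfX ψ (u + s) :=
    lcfX_mono hψ_one hψ_mono hψ_small (by linarith [hs.1] : u ≤ u + s)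
  have hθ0 : 0 ≤ θ := by
    apply div_nonneg _ (hψpos x).le
    simp only [hθdef, hxdef]
    linarith [hmx]
  have hxθ : x + θ * ψ x = lcfX ψ (u + s) := by
    simp only [hθdef]
    rw [div_mul_eq_mul_div, mul_div_assoc, div_self (hψpos x).ne', mul_one]
    ring
  have hθN : θ ≤ (N:ℝ) := by
    by_contra hcon
    push_neg at hcon
    have h1 : x + (N:ℝ) * ψ x < lcfX ψ (u + s) := by
      rw [← hxθ]
      have := mul_lt_mul_of_pos_right hcon (hψpos x)
      linarith
    have h2 : lcfGamma ψ (x + (N:ℝ) * ψ x) ≤ u + s := by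
      rw [← hX2]
      exact ((lcf_gamma_strictMono hψ_one hψ_mono) h1).le
    have h3 : 3 ≤ lcfGamma ψ (x + (N:ℝ) * ψ x) - lcfGamma ψ x := (hx₀ x hXu).2
    rw [hX1] at h3
    linarith [hs.2]
  have := (hx₀ x hXu).1 θ ⟨hθ0, hθN⟩
  rwa [hxθ] at this

end Transfer

section Rep

variable {ψ a h : ℝ → ℝ}

lemma lcf_tendsto_zero_of_bound {f : ℝ → ℝ}
    (hb : ∀ ε > (0:ℝ), ∀ᶠ u in atTop, |f u| ≤ ε) : Tendsto f atTop (𝓝 0) := by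
  apply NormedAddCommGroup.tendsto_nhds_zero.mpr
  intro ε hε
  filter_upwards [hb (ε/2) (half_pos hε)] with u hu
  rw [Real.norm_eq_abs]
  linarith

lemma lcf_rep (hψ_one : ∀ x, 1 ≤ ψ x) (hψ_mono : Monotone ψ)
    (hψ_small : Tendsto (fun x => ψ x / x) atTop (𝓝 0))
    (ha_anti : AntitoneOn a (Set.Ioi 0))
    (ha_pos : ∀ v : ℝ, 0 < v → 0 < a v)
    (hA : ∀ v : ℝ, 0 < v → ∀ᶠ x in atTop, a v * ψ x ≤ ψ (x - v * ψ x))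
    (ha_int : Tendsto (fun r => ∫ u in (0:ℝ)..r, a u) atTop atTop)
    (hh_meas : Measurable h)
    (hp : ∀ v : ℝ, 0 ≤ v → Tendsto (fun x => h (x + v * ψ x) - h x) atTop (𝓝 0)) :
    ∃ εu : ℝ → ℝ, Continuous εu ∧ Tendsto εu atTop (𝓝 0) ∧
      ∃ L : ℝ, Tendsto (fun u => h (lcfX ψ u) - ∫ t in (0:ℝ)..u, εu t) atTop (𝓝 L) := by
  set H : ℝ → ℝ := fun u => h (lcfX ψ u) with hHdef
  have htr : ∀ ε > (0:ℝ), ∀ᶠ u in atTop, ∀ s ∈ Icc (0:ℝ) 2, |H (u + s) - H u| ≤ ε :=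
    fun ε hε => lcf_transfer hψ_one hψ_mono hψ_small ha_anti ha_pos hA ha_int hh_meas hp ε hε
  have hHmeas : Measurable H :=
    hh_meas.comp (lcfX_mono hψ_one hψ_mono hψ_small).measurable
  obtain ⟨U₀, hU₀⟩ := eventually_atTop.1 (htr 1 one_pos)
  set H' : ℝ → ℝ := fun u => H (max u U₀) with hH'def
  have hH'meas : Measurable H' :=
    hHmeas.comp ((monotone_id.max monotone_const).measurable)
  have hH'eq : ∀ t, U₀ ≤ t → H' t = H t := by
    intro t ht; simp only [hH'def, max_eq_left ht]
  -- growth bound by induction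
  have hgrow : ∀ n : ℕ, ∀ u : ℝ, U₀ ≤ u → u ≤ U₀ + 2*n → |H u - H U₀| ≤ n := by
    intro n
    induction n with
    | zero =>
      intro u h1 h2
      push_cast at h2 ⊢
      have : u = U₀ := le_antisymm (by linarith) h1
      simp [this]
    | succ n ih =>
      intro u h1 h2
      by_cases hc : u ≤ U₀ + 2*n
      · refine le_trans (ih u h1 hc) ?_
        push_cast; linarith
      · push_neg at hc
        have hw1 : U₀ ≤ U₀ + 2*(n:ℝ) := by linarith [Nat.cast_nonneg (α := ℝ) n]
        have h3 : |H u - H (U₀ + 2*(n:ℝ))| ≤ 1 := by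
          have hb := hU₀ (U₀ + 2*(n:ℝ)) hw1 (u - (U₀ + 2*(n:ℝ)))
            ⟨by linarith, by push_cast at h2; linarith⟩
          rwa [add_sub_cancel] at hb
        have h4 : |H (U₀ + 2*(n:ℝ)) - H U₀| ≤ n := ih _ hw1 (by push_cast; linarith)
        calc |H u - H U₀| ≤ |H u - H (U₀ + 2*(n:ℝ))| + |H (U₀ + 2*(n:ℝ)) - H U₀| :=
              abs_sub_le _ _ _
        _ ≤ 1 + n := add_le_add h3 h4
        _ = ((n+1 : ℕ):ℝ) := by push_cast; ring
  -- local integrability of H'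
  have hH'int : ∀ p q : ℝ, IntervalIntegrable H' volume p q := by
    intro p q
    obtain ⟨n, hn⟩ := exists_nat_ge ((max p q - U₀)/2)
    have hbd : ∀ t ∈ Set.uIcc p q, |H' t| ≤ |H U₀| + n := by
      intro t ht
      have htle : t ≤ max p q := by
        rcases Set.mem_uIcc.1 ht with h | h
        · exact le_trans h.2 (le_max_right _ _)
        · exact le_trans h.2 (le_max_left _ _)
      have hm1 : U₀ ≤ max t U₀ := le_max_right _ _
      have hm2 : max t U₀ ≤ U₀ + 2*n := by
        apply max_le _ (by linarith [Nat.cast_nonneg (α := ℝ) n])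
        have : max p q ≤ U₀ + 2*n := by linarith [hn]
        linarith
      have hg := hgrow n (max t U₀) hm1 hm2
      have habs : |H (max t U₀)| ≤ |H U₀| + |H (max t U₀) - H U₀| := by
        have h0 := abs_add_le (H U₀) (H (max t U₀) - H U₀)
        rw [show H U₀ + (H (max t U₀) - H U₀) = H (max t U₀) by ring] at h0
        exact h0
      calc |H' t| = |H (max t U₀)| := rfl
      _ ≤ |H U₀| + |H (max t U₀) - H U₀| := habs
      _ ≤ |H U₀| + n := by linarith
    rw [intervalIntegrable_iff]
    apply Measure.integrableOn_of_bounded measure_Ioc_lt_top.ne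
      hH'meas.aestronglyMeasurable
    apply (ae_restrict_iff' measurableSet_Ioc).2
    apply ae_of_all
    intro t ht
    rw [Real.norm_eq_abs]
    apply hbd
    have h1 : t ∈ Icc (min p q) (max p q) := Set.Ioc_subset_Icc_self ht
    rwa [Set.uIcc]
  -- the averaged function G and its average G₂
  set G : ℝ → ℝ := fun u => ∫ t in u..(u+1), H' t with hGdef
  have hGcont : Continuous G := by
    have hprim := intervalIntegral.continuous_primitive hH'int 0
    have : G = fun u => (∫ t in (0:ℝ)..(u+1), H' t) - ∫ t in (0:ℝ)..u, H' t := by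
      funext u
      rw [eq_sub_iff_add_eq', intervalIntegral.integral_add_adjacent_intervals
        (hH'int 0 u) (hH'int u (u+1))]
    rw [this]
    exact (hprim.comp (continuous_id.add continuous_const)).sub hprim
  set G₂ : ℝ → ℝ := fun u => ∫ t in u..(u+1), G t with hG₂def
  -- eventual closeness of G to H
  have hGH : ∀ ε > (0:ℝ), ∀ᶠ u in atTop, |G u - H u| ≤ ε := by
    intro ε hε
    filter_upwards [htr ε hε, eventually_ge_atTop U₀] with u hu huU₀
    have hsub : G u - H u = ∫ t in u..(u+1), (H' t - H u) := by
      rw [intervalIntegral.integral_sub (hH'int u (u+1)) intervalIntegrable_const,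
        intervalIntegral.integral_const]
      simp [hGdef, hG₂def]
    rw [hsub]
    have hb := intervalIntegral.norm_integral_le_of_norm_le_const
      (C := ε) (f := fun t => H' t - H u) (a := u) (b := u+1) ?_
    · rw [Real.norm_eq_abs] at hb
      calc |∫ t in u..(u+1), (H' t - H u)| ≤ ε * |u + 1 - u| := hb
      _ = ε := by simp
    · intro t ht
      rw [Set.uIoc_of_le (by linarith : u ≤ u + 1)] at ht
      have htU₀ : U₀ ≤ t := le_trans huU₀ ht.1.le
      show ‖H' t - H u‖ ≤ ε
      rw [Real.norm_eq_abs, hH'eq t htU₀]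
      have := hu (t - u) ⟨by linarith [ht.1], by linarith [ht.2]⟩
      rwa [add_sub_cancel] at this
  -- eventual closeness of G₂ to H
  have hG₂H : ∀ ε > (0:ℝ), ∀ᶠ u in atTop, |G₂ u - H u| ≤ ε := by
    intro ε hε
    filter_upwards [htr ε hε, eventually_ge_atTop U₀] with u hu huU₀
    have hstep1 : ∀ t ∈ Icc u (u+1), |G t - H u| ≤ ε := by
      intro t ht
      have hsub : G t - H u = ∫ r in t..(t+1), (H' r - H u) := by
        rw [intervalIntegral.integral_sub (hH'int t (t+1)) intervalIntegrable_const,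
          intervalIntegral.integral_const]
        simp [hGdef, hG₂def]
      rw [hsub]
      have hb := intervalIntegral.norm_integral_le_of_norm_le_const
        (C := ε) (f := fun r => H' r - H u) (a := t) (b := t+1) ?_
      · rw [Real.norm_eq_abs] at hb
        calc |∫ r in t..(t+1), (H' r - H u)| ≤ ε * |t + 1 - t| := hb
        _ = ε := by simp
      · intro r hr
        rw [Set.uIoc_of_le (by linarith : t ≤ t + 1)] at hr
        have hrU₀ : U₀ ≤ r := le_trans huU₀ (le_trans ht.1 hr.1.le)
        show ‖H' r - H u‖ ≤ ε
        rw [Real.norm_eq_abs, hH'eq r hrU₀]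
        have := hu (r - u) ⟨by linarith [ht.1, hr.1], by linarith [ht.2, hr.2]⟩
        rwa [add_sub_cancel] at this
    have hsub2 : G₂ u - H u = ∫ t in u..(u+1), (G t - H u) := by
      rw [intervalIntegral.integral_sub (hGcont.intervalIntegrable u (u+1))
        intervalIntegrable_const, intervalIntegral.integral_const]
      simp [hGdef, hG₂def]
    rw [hsub2]
    have hb := intervalIntegral.norm_integral_le_of_norm_le_const
      (C := ε) (f := fun t => G t - H u) (a := u) (b := u+1) ?_
    · rw [Real.norm_eq_abs] at hb
      calc |∫ t in u..(u+1), (G t - H u)| ≤ ε * |u + 1 - u| := hb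
      _ = ε := by simp
    · intro t ht
      rw [Set.uIoc_of_le (by linarith : u ≤ u + 1)] at ht
      show ‖G t - H u‖ ≤ ε
      rw [Real.norm_eq_abs]
      exact hstep1 t ⟨ht.1.le, ht.2⟩
  -- the continuous error function
  set εu : ℝ → ℝ := fun t => G (t+1) - G t with hεudef
  have hεucont : Continuous εu := (hGcont.comp (continuous_id.add continuous_const)).sub hGcont
  have hH1 : Tendsto (fun t => H (t+1) - H t) atTop (𝓝 0) := by
    apply lcf_tendsto_zero_of_bound
    intro ε hε
    filter_upwards [htr ε hε] with u hu
    exact hu 1 ⟨zero_le_one, one_le_two⟩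
  have hGHt : Tendsto (fun u => G u - H u) atTop (𝓝 0) := lcf_tendsto_zero_of_bound hGH
  have hG₂Ht : Tendsto (fun u => G₂ u - H u) atTop (𝓝 0) := lcf_tendsto_zero_of_bound hG₂H
  have hεut : Tendsto εu atTop (𝓝 0) := by
    have h1 : Tendsto (fun t => G (t+1) - H (t+1)) atTop (𝓝 0) :=
      hGHt.comp (tendsto_atTop_add_const_right _ 1 tendsto_id)
    have h2 : Tendsto (fun t => (G (t+1) - H (t+1)) + (H (t+1) - H t) - (G t - H t))
        atTop (𝓝 0) := by
      have := (h1.add hH1).sub hGHt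
      simpa using this
    apply h2.congr
    intro t
    simp only [hεudef]
    ring
  -- telescoping identity
  have htel : ∀ p q : ℝ, (∫ t in p..q, εu t) = G₂ q - G₂ p := by
    intro p q
    have hGint : ∀ p' q' : ℝ, IntervalIntegrable G volume p' q' :=
      fun p' q' => hGcont.intervalIntegrable p' q'
    have hG1int : ∀ p' q' : ℝ, IntervalIntegrable (fun t => G (t+1)) volume p' q' :=
      fun p' q' => (hGcont.comp (continuous_id.add continuous_const)).intervalIntegrable p' q'
    have hi : (∫ t in p..q, εu t) = (∫ t in p..q, G (t+1)) - ∫ t in p..q, G t :=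
      intervalIntegral.integral_sub (hG1int p q) (hGint p q)
    have hshift : (∫ t in p..q, G (t+1)) = ∫ t in (p+1)..(q+1), G t :=
      intervalIntegral.integral_comp_add_right G 1
    have hA1 : (∫ t in p..(p+1), G t) + (∫ t in (p+1)..(q+1), G t) = ∫ t in p..(q+1), G t :=
      intervalIntegral.integral_add_adjacent_intervals (hGint p (p+1)) (hGint (p+1) (q+1))
    have hA2 : (∫ t in p..q, G t) + (∫ t in q..(q+1), G t) = ∫ t in p..(q+1), G t :=
      intervalIntegral.integral_add_adjacent_intervals (hGint p q) (hGint q (q+1))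
    simp only [hG₂def]
    rw [hi, hshift]
    linarith [hA1, hA2]
  refine ⟨εu, hεucont, hεut, G₂ 0, ?_⟩
  have hfe : ∀ u : ℝ, H u - (∫ t in (0:ℝ)..u, εu t) = -(G₂ u - H u) + G₂ 0 := by
    intro u
    rw [htel 0 u]
    ring
  have := (hG₂Ht.neg).add_const (G₂ 0)
  rw [neg_zero, zero_add] at this
  exact this.congr fun u => (hfe u).symm

end Rep

section Subst

lemma lcf_subst {εu : ℝ → ℝ} (hc : Continuous εu) (b : ℝ) :
    (∫ t in (1:ℝ)..(Real.exp b), εu (Real.log t) / t) = ∫ u in (0:ℝ)..b, εu u := by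
  have hpos : ∀ t ∈ Set.uIcc (1:ℝ) (Real.exp b), 0 < t := by
    intro t ht
    rw [Set.uIcc] at ht
    have h1 : 0 < min 1 (Real.exp b) := lt_min one_pos (Real.exp_pos b)
    exact lt_of_lt_of_le h1 ht.1
  have key := intervalIntegral.integral_comp_smul_deriv
    (f := Real.log) (f' := fun t => t⁻¹) (g := εu) (a := 1) (b := Real.exp b)
    (fun t ht => Real.hasDerivAt_log (hpos t ht).ne') ?_ hc
  · rw [Real.log_one, Real.log_exp] at key
    rw [← key]
    apply intervalIntegral.integral_congr
    intro t ht
    show εu (Real.log t) / t = t⁻¹ • (εu ∘ Real.log) t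
    rw [smul_eq_mul]
    simp [div_eq_mul_inv, mul_comm]
  · apply ContinuousOn.inv₀ continuousOn_id
    intro t ht
    exact (hpos t ht).ne'

variable {ψ a g : ℝ → ℝ}

lemma lcf_forward (hψ_one : ∀ x, 1 ≤ ψ x) (hψ_mono : Monotone ψ)
    (hψ_small : Tendsto (fun x => ψ x / x) atTop (𝓝 0))
    (ha_anti : AntitoneOn a (Set.Ioi 0))
    (ha_pos : ∀ v : ℝ, 0 < v → 0 < a v)
    (hA : ∀ v : ℝ, 0 < v → ∀ᶠ x in atTop, a v * ψ x ≤ ψ (x - v * ψ x))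
    (ha_int : Tendsto (fun r => ∫ u in (0:ℝ)..r, a u) atTop atTop)
    (hg_pos : ∀ x, 0 < g x) (hg_meas : Measurable g)
    (hlcf : ∀ v : ℝ, Tendsto (fun x => g (x + v * ψ x) / g x) atTop (𝓝 1)) :
    ∃ (c ε : ℝ → ℝ) (c₀ : ℝ), Measurable c ∧ Measurable ε ∧
      (∀ t, 0 < c t) ∧ 0 < c₀ ∧
      Tendsto c atTop (𝓝 c₀) ∧ Tendsto ε atTop (𝓝 0) ∧
      ∀ x ≥ (1 : ℝ),
        g x = c x *
          Real.exp (∫ t in (1:ℝ)..(Real.exp (∫ s in (1:ℝ)..x, 1 / ψ s)), ε t / t) := by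
  set h : ℝ → ℝ := fun x => Real.log (g x) with hhdef
  have hh_meas : Measurable h := hg_meas.log
  have hp : ∀ v : ℝ, 0 ≤ v → Tendsto (fun x => h (x + v * ψ x) - h x) atTop (𝓝 0) := by
    intro v _
    have h2 : Tendsto (fun x => Real.log (g (x + v * ψ x) / g x)) atTop (𝓝 (Real.log 1)) :=
      ((Real.continuousAt_log one_ne_zero).tendsto).comp (hlcf v)
    rw [Real.log_one] at h2
    apply h2.congr
    intro x
    exact Real.log_div (hg_pos _).ne' (hg_pos _).ne'
  obtain ⟨εu, hεucont, hεut, L, hL⟩ :=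
    lcf_rep hψ_one hψ_mono hψ_small ha_anti ha_pos hA ha_int hh_meas hp
  set F : ℝ → ℝ := fun u => ∫ t in (0:ℝ)..u, εu t with hFdef
  have hFcont : Continuous F :=
    intervalIntegral.continuous_primitive (fun p q => hεucont.intervalIntegrable p q) 0
  set ε : ℝ → ℝ := fun t => εu (Real.log t) with hεdef
  have hsub : ∀ b : ℝ, (∫ t in (1:ℝ)..(Real.exp b), ε t / t) = F b := fun b =>
    lcf_subst hεucont b
  refine ⟨fun x => g x * Real.exp (-(F (lcfGamma ψ x))), ε, Real.exp L, ?_, ?_, ?_, ?_, ?_, ?_, ?_⟩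
  · exact hg_meas.mul (Real.measurable_exp.comp
      (((hFcont.comp (lcf_gamma_continuous hψ_one hψ_mono)).measurable).neg))
  · exact hεucont.measurable.comp Real.measurable_log
  · exact fun t => mul_pos (hg_pos t) (Real.exp_pos _)
  · exact Real.exp_pos L
  · have hφ : Tendsto (fun x => (fun u => h (lcfX ψ u) - F u) (lcfGamma ψ x)) atTop (𝓝 L) :=
      hL.comp (lcf_gamma_tendsto hψ_one hψ_mono hψ_small)
    have hexp : Tendsto (fun x => Real.exp (h (lcfX ψ (lcfGamma ψ x)) - F (lcfGamma ψ x)))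
        atTop (𝓝 (Real.exp L)) := (Real.continuous_exp.continuousAt.tendsto).comp hφ
    apply hexp.congr'
    filter_upwards [eventually_ge_atTop (1:ℝ)] with x hx
    rw [lcfX_gamma hψ_one hψ_mono hψ_small x hx]
    rw [Real.exp_sub, Real.exp_log (hg_pos x), Real.exp_neg]
    rw [div_eq_mul_inv]
  · exact hεut.comp Real.tendsto_log_atTop
  · intro x _
    show g x = g x * Real.exp (-(F (lcfGamma ψ x))) *
      Real.exp (∫ t in (1:ℝ)..(Real.exp (lcfGamma ψ x)), ε t / t)
    rw [hsub (lcfGamma ψ x), mul_assoc, ← Real.exp_add, neg_add_cancel, Real.exp_zero, mul_one]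

end Subst

section Reverse

variable {ψ a g : ℝ → ℝ}

lemma lcf_reverse (hψ_one : ∀ x, 1 ≤ ψ x) (hψ_mono : Monotone ψ)
    (hψ_small : Tendsto (fun x => ψ x / x) atTop (𝓝 0))
    (ha_pos : ∀ v : ℝ, 0 < v → 0 < a v)
    (hA : ∀ v : ℝ, 0 < v → ∀ᶠ x in atTop, a v * ψ x ≤ ψ (x - v * ψ x))
    (hg_pos : ∀ x, 0 < g x)
    (hrep : ∃ (c ε : ℝ → ℝ) (c₀ : ℝ), Measurable c ∧ Measurable ε ∧
      (∀ t, 0 < c t) ∧ 0 < c₀ ∧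
      Tendsto c atTop (𝓝 c₀) ∧ Tendsto ε atTop (𝓝 0) ∧
      ∀ x ≥ (1 : ℝ),
        g x = c x *
          Real.exp (∫ t in (1:ℝ)..(Real.exp (∫ s in (1:ℝ)..x, 1 / ψ s)), ε t / t)) :
    ∀ v : ℝ, Tendsto (fun x => g (x + v * ψ x) / g x) atTop (𝓝 1) := by
  obtain ⟨c, ε, c₀, hcmeas, hεmeas, hcpos, hc₀pos, hct, hεt, heqn⟩ := hrep
  have hψpos := lcf_psi_pos hψ_one
  have hγt := lcf_gamma_tendsto hψ_one hψ_mono hψ_small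
  have hEt : Tendsto (fun x => Real.exp (lcfGamma ψ x)) atTop atTop :=
    Real.tendsto_exp_atTop.comp hγt
  set I : ℝ → ℝ := fun x => ∫ t in (1:ℝ)..(Real.exp (lcfGamma ψ x)), ε t / t with hIdef
  have heq : ∀ x ≥ (1:ℝ), g x = c x * Real.exp (I x) := heqn
  intro v
  have hshift := lcf_shift_tendsto hψ_one hψ_small v
  have hcratio : Tendsto (fun x => c (x + v * ψ x) / c x) atTop (𝓝 1) := by
    have h1 : Tendsto (fun x => c (x + v * ψ x)) atTop (𝓝 c₀) := hct.comp hshift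
    have := h1.div hct hc₀pos.ne'
    rwa [div_self hc₀pos.ne'] at this
  by_cases hP : ∀ b : ℝ, 1 ≤ b → IntervalIntegrable (fun t => ε t / t) volume 1 b
  · -- integrable case
    have hIdiff : Tendsto (fun x => I (x + v * ψ x) - I x) atTop (𝓝 0) := by
      apply lcf_tendsto_zero_of_bound
      intro η hη
      obtain ⟨Cv, hCv0, hCvev⟩ : ∃ Cv : ℝ, 0 ≤ Cv ∧ ∀ᶠ x in atTop,
          |lcfGamma ψ (x + v * ψ x) - lcfGamma ψ x| ≤ Cv := by
        rcases le_or_gt 0 v with hv | hv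
        · refine ⟨v, hv, Filter.Eventually.of_forall fun x => ?_⟩
          have h1 : x ≤ x + v * ψ x := by nlinarith [hψpos x]
          have h2 := lcf_gamma_diff_le hψ_one hψ_mono x (x + v * ψ x) h1
          have h3 := lcf_gamma_diff_ge hψ_one hψ_mono x (x + v * ψ x) h1
          have h0 : (0:ℝ) ≤ (x + v * ψ x - x) / ψ (x + v * ψ x) :=
            div_nonneg (by nlinarith [hψpos x]) (hψpos _).le
          rw [abs_of_nonneg (by linarith :
            (0:ℝ) ≤ lcfGamma ψ (x + v * ψ x) - lcfGamma ψ x)]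
          have h4 : (x + v * ψ x - x) / ψ x = v := by
            rw [show x + v * ψ x - x = v * ψ x by ring, mul_div_assoc,
              div_self (hψpos x).ne', mul_one]
          rw [h4] at h2
          exact h2
        · set w := -v with hwdef
          have hw : 0 < w := by simp only [hwdef]; linarith
          refine ⟨w / a w, div_nonneg hw.le (ha_pos w hw).le, ?_⟩
          filter_upwards [hA w hw] with x hx
          have h1 : x + v * ψ x ≤ x := by nlinarith [hψpos x]
          have h2 := lcf_gamma_diff_le hψ_one hψ_mono (x + v * ψ x) x h1
          have h3 := lcf_gamma_diff_ge hψ_one hψ_mono (x + v * ψ x) x h1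
          have h0 : (0:ℝ) ≤ (x - (x + v * ψ x)) / ψ x :=
            div_nonneg (by nlinarith [hψpos x]) (hψpos x).le
          rw [abs_of_nonpos (by linarith :
            lcfGamma ψ (x + v * ψ x) - lcfGamma ψ x ≤ 0)]
          have hxv : x + v * ψ x = x - w * ψ x := by simp only [hwdef]; ring
          have h5 : x - (x + v * ψ x) = w * ψ x := by simp only [hwdef]; ring
          rw [h5] at h2
          have h6 : a w * ψ x ≤ ψ (x + v * ψ x) := by rw [hxv]; exact hx
          have h7 : w * ψ x / ψ (x + v * ψ x) ≤ w * ψ x / (a w * ψ x) := by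
            apply div_le_div_of_nonneg_left (mul_nonneg hw.le (hψpos x).le)
              (mul_pos (ha_pos w hw) (hψpos x)) h6
          have h8 : w * ψ x / (a w * ψ x) = w / a w := by
            rw [mul_div_mul_right _ _ (hψpos x).ne']
          linarith
      set m : ℝ := η / (Cv + 1) with hmdef
      have hm : 0 < m := by positivity
      obtain ⟨T, hT⟩ := eventually_atTop.1 (hεt.eventually (eventually_abs_sub_lt 0 hm))
      set T' : ℝ := max T 1 with hT'def
      have hT'1 : (1:ℝ) ≤ T' := le_max_right _ _
      have hεbound : ∀ t, T' ≤ t → |ε t| ≤ m := by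
        intro t ht
        have := hT t (le_trans (le_max_left _ _) ht)
        rw [sub_zero] at this
        exact this.le
      have hkey : ∀ p q : ℝ, T' ≤ p → p ≤ q →
          |∫ t in p..q, ε t / t| ≤ m * (Real.log q - Real.log p) := by
        intro p q hp hpq
        have hppos : (0:ℝ) < p := lt_of_lt_of_le one_pos (le_trans hT'1 hp)
        have hqpos : (0:ℝ) < q := lt_of_lt_of_le hppos hpq
        have hint : IntervalIntegrable (fun t => ε t / t) volume p q := by
          apply (hP (max q 1) (le_max_right _ _)).mono_set
          apply Set.uIcc_subset_uIcc
          · rw [Set.uIcc_of_le (le_max_right _ _)]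
            exact ⟨le_trans hT'1 hp, le_trans hpq (le_max_left _ _)⟩
          · rw [Set.uIcc_of_le (le_max_right _ _)]
            exact ⟨le_trans hT'1 (le_trans hp hpq), le_max_left _ _⟩
        have habs := intervalIntegral.abs_integral_le_integral_abs
          (f := fun t => ε t / t) (μ := volume) hpq
        have hmono : (∫ t in p..q, |ε t / t|) ≤ ∫ t in p..q, m * (1/t) := by
          apply intervalIntegral.integral_mono_on hpq hint.abs
          · apply ContinuousOn.intervalIntegrable
            apply ContinuousOn.mul continuousOn_const
            apply ContinuousOn.div continuousOn_const continuousOn_id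
            intro t ht
            rw [Set.uIcc_of_le hpq] at ht
            exact (lt_of_lt_of_le hppos ht.1).ne'
          · intro t ht
            have htpos : 0 < t := lt_of_lt_of_le hppos ht.1
            rw [abs_div, abs_of_pos htpos, mul_one_div]
            gcongr
            exact hεbound t (le_trans hp ht.1)
        have hval : (∫ t in p..q, m * (1/t)) = m * (Real.log q - Real.log p) := by
          rw [intervalIntegral.integral_const_mul, integral_one_div (by
            rw [Set.uIcc_of_le hpq]
            intro hmem
            linarith [hmem.1])]
          rw [Real.log_div hqpos.ne' hppos.ne']
        calc |∫ t in p..q, ε t / t| ≤ ∫ t in p..q, |ε t / t| := habs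
        _ ≤ ∫ t in p..q, m * (1/t) := hmono
        _ = m * (Real.log q - Real.log p) := hval
      have hmCv : m * Cv ≤ η := by
        rw [hmdef, div_mul_eq_mul_div, div_le_iff₀ (by positivity)]
        nlinarith
      filter_upwards [hCvev, hEt.eventually (eventually_ge_atTop T'),
        (hEt.comp hshift).eventually (eventually_ge_atTop T')] with x hCx hEx hEy
      set Ex := Real.exp (lcfGamma ψ x) with hExdef
      set Ey := Real.exp (lcfGamma ψ (x + v * ψ x)) with hEydef
      have hEx1 : (1:ℝ) ≤ Ex := le_trans hT'1 hEx
      have hEy1 : (1:ℝ) ≤ Ey := le_trans hT'1 hEy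
      have hdiffeq : I (x + v * ψ x) - I x = ∫ t in Ex..Ey, ε t / t := by
        exact intervalIntegral.integral_interval_sub_left (hP Ey hEy1) (hP Ex hEx1)
      rw [hdiffeq]
      have hlogs : Real.log Ey - Real.log Ex
          = lcfGamma ψ (x + v * ψ x) - lcfGamma ψ x := by
        rw [hExdef, hEydef, Real.log_exp, Real.log_exp]
      rcases le_or_gt Ex Ey with hxy | hxy
      · have := hkey Ex Ey hEx hxy
        have hb : Real.log Ey - Real.log Ex ≤ Cv := by
          rw [hlogs]
          exact le_trans (le_abs_self _) hCx
        calc |∫ t in Ex..Ey, ε t / t| ≤ m * (Real.log Ey - Real.log Ex) := this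
        _ ≤ m * Cv := by nlinarith
        _ ≤ η := hmCv
      · have := hkey Ey Ex hEy hxy.le
        rw [intervalIntegral.integral_symm, abs_neg]
        have hb : Real.log Ex - Real.log Ey ≤ Cv := by
          have : -(Real.log Ey - Real.log Ex) ≤ |lcfGamma ψ (x + v * ψ x) - lcfGamma ψ x| := by
            rw [hlogs]
            exact neg_le_abs _
          have h2 := hCx
          rw [← hlogs] at h2
          linarith [neg_le_abs (Real.log Ey - Real.log Ex), h2]
        calc |∫ t in Ey..Ex, ε t / t| ≤ m * (Real.log Ex - Real.log Ey) := this
        _ ≤ m * Cv := by nlinarith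
        _ ≤ η := hmCv
    have hev : ∀ᶠ x in atTop, (fun x => (c (x + v * ψ x) / c x) *
        Real.exp (I (x + v * ψ x) - I x)) x = g (x + v * ψ x) / g x := by
      filter_upwards [eventually_ge_atTop (1:ℝ),
        hshift.eventually (eventually_ge_atTop (1:ℝ))] with x hx hy
      rw [heq x hx, heq _ hy, Real.exp_sub]
      exact (mul_div_mul_comm _ _ _ _).symm
    have hlim : Tendsto (fun x => (c (x + v * ψ x) / c x) *
        Real.exp (I (x + v * ψ x) - I x)) atTop (𝓝 1) := by
      have h2 : Tendsto (fun x => Real.exp (I (x + v * ψ x) - I x)) atTop (𝓝 1) := by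
        have := (Real.continuous_exp.continuousAt.tendsto).comp hIdiff
        rwa [Real.exp_zero] at this
      have := hcratio.mul h2
      rwa [mul_one] at this
    exact hlim.congr' hev
  · push_neg at hP
    obtain ⟨b₀, hb₀1, hb₀⟩ := hP
    have hI0 : ∀ x : ℝ, b₀ ≤ Real.exp (lcfGamma ψ x) → I x = 0 := by
      intro x hx
      apply intervalIntegral.integral_undef
      intro hint
      apply hb₀
      apply hint.mono_set
      apply Set.uIcc_subset_uIcc Set.left_mem_uIcc
      rw [Set.uIcc_of_le (le_trans hb₀1 hx)]
      exact ⟨hb₀1, hx⟩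
    have hev : ∀ᶠ x in atTop, (fun x => c (x + v * ψ x) / c x) x
        = g (x + v * ψ x) / g x := by
      filter_upwards [eventually_ge_atTop (1:ℝ),
        hshift.eventually (eventually_ge_atTop (1:ℝ)),
        hEt.eventually (eventually_ge_atTop b₀),
        (hEt.comp hshift).eventually (eventually_ge_atTop b₀)] with x hx hy hbx hby
      rw [heq x hx, heq _ hy, hI0 x hbx, hI0 _ hby, Real.exp_zero, mul_one, mul_one]
    exact hcratio.congr' hev

end Reverse

/-- Integral representation theorem for `ψ`-l.c.f.'s, `ψ ∈ 𝒦`: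
`g` is a `ψ`-l.c.f. iff `g x = c x · exp (∫₁^{e^{γ x}} ε t / t dt)`. -/
theorem psi_lcf_integral_representation (ψ a g : ℝ → ℝ)
    (hψ_one : ∀ x, 1 ≤ ψ x) (hψ_mono : Monotone ψ)
    (hψ_small : Tendsto (fun x => ψ x / x) atTop (𝓝 0))
    (ha_anti : AntitoneOn a (Set.Ioi 0))
    (ha_pos : ∀ v : ℝ, 0 < v → 0 < a v)
    (hA : ∀ v : ℝ, 0 < v → ∀ᶠ x in atTop, a v * ψ x ≤ ψ (x - v * ψ x))
    (ha_int : Tendsto (fun r => ∫ u in (0:ℝ)..r, a u) atTop atTop)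
    (hg_pos : ∀ x, 0 < g x) (hg_meas : Measurable g) :
    (∀ v : ℝ, Tendsto (fun x => g (x + v * ψ x) / g x) atTop (𝓝 1)) ↔
      ∃ (c ε : ℝ → ℝ) (c₀ : ℝ), Measurable c ∧ Measurable ε ∧
        (∀ t, 0 < c t) ∧ 0 < c₀ ∧
        Tendsto c atTop (𝓝 c₀) ∧ Tendsto ε atTop (𝓝 0) ∧
        ∀ x ≥ (1 : ℝ),
          g x = c x *
            Real.exp (∫ t in (1:ℝ)..(Real.exp (∫ s in (1:ℝ)..x, 1 / ψ s)), ε t / t) := by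
  constructor
  · exact lcf_forward hψ_one hψ_mono hψ_small ha_anti ha_pos hA ha_int hg_pos hg_meas
  · exact lcf_reverse hψ_one hψ_mono hψ_small ha_pos hA hg_pos
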